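/- Let g be the 6-dimensional nilpotent Lie algebra over ℂ with basis e₁,…,e₆ and nonzero brackets [e₁,eᵢ] = e_{i+1} for 2 ≤ i ≤ 5, [e₂,e₅] = -e₆, [e₃,e₄] = e₆. Then every 2-cocycle ω ∈ Z²(g,ℂ) satisfies ω(x, e₆) = 0 for all x in the span of e₂, e₃, e₄, e₅, e₆; in particular g admits no nondegenerate 2-cocycle, i.e. g is not symplectic. -/

import Mathlib

/-- For the 6-dimensional nilpotent Lie algebra over `ℂ` with basis `e₁,…,e₆`, nonzero
brackets `[e₁,eᵢ] = e_{i+1}` (2 ≤ i ≤ 5), `[e₂,e₅] = -e₆`, `[e₃,e₄] = e₆`, every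
2-cocycle `ω` satisfies `ω(x,e₆) = 0` for all `x` in the span of `e₂,…,e₆`; in
particular there is no nondegenerate 2-cocycle, i.e. the algebra is not symplectic. -/
theorem dim6_not_symplectic (g : Type*) [LieRing g] [LieAlgebra ℂ g]
    (e : Module.Basis (Fin 6) ℂ g)
    (h12 : ⁅e 0, e 1⁆ = e 2) (h13 : ⁅e 0, e 2⁆ = e 3)
    (h14 : ⁅e 0, e 3⁆ = e 4) (h15 : ⁅e 0, e 4⁆ = e 5)
    (h16 : ⁅e 0, e 5⁆ = 0)
    (h23 : ⁅e 1, e 2⁆ = 0) (h24 : ⁅e 1, e 3⁆ = 0)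
    (h25 : ⁅e 1, e 4⁆ = - e 5) (h26 : ⁅e 1, e 5⁆ = 0)
    (h34 : ⁅e 2, e 3⁆ = e 5) (h35 : ⁅e 2, e 4⁆ = 0) (h36 : ⁅e 2, e 5⁆ = 0)
    (h45 : ⁅e 3, e 4⁆ = 0) (h46 : ⁅e 3, e 5⁆ = 0) (h56 : ⁅e 4, e 5⁆ = 0) :
    ∀ ω : g →ₗ[ℂ] g →ₗ[ℂ] ℂ,
      (∀ x y : g, ω x y = - ω y x) →
      (∀ x y z : g, ω ⁅x, y⁆ z - ω ⁅x, z⁆ y + ω ⁅y, z⁆ x = 0) →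
      (∀ x ∈ Submodule.span ℂ ({e 1, e 2, e 3, e 4, e 5} : Set g), ω x (e 5) = 0) ∧
      ¬ (∀ x : g, (∀ y : g, ω x y = 0) → x = 0) := by
  intro ω hsk hc
  have hdiag : ∀ x : g, ω x x = 0 := fun x => by linear_combination (hsk x x) / 2
  have c51 : ω (e 5) (e 1) = 0 := by
    have A := hc (e 1) (e 2) (e 3); rw [h23, h24, h34] at A; simpa using A
  have c52 : ω (e 5) (e 2) = 0 := by
    have A := hc (e 1) (e 2) (e 4); rw [h23, h25, h35] at A
    simp only [map_zero, LinearMap.zero_apply, map_neg, LinearMap.neg_apply] at A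
    linear_combination A
  have c53 : ω (e 5) (e 3) = 0 := by
    have A := hc (e 1) (e 3) (e 4); rw [h24, h25, h45] at A
    simp only [map_zero, LinearMap.zero_apply, map_neg, LinearMap.neg_apply] at A
    linear_combination A
  have c54 : ω (e 5) (e 4) = 0 := by
    have A := hc (e 2) (e 3) (e 4); rw [h34, h35, h45] at A; simpa using A
  have c50 : ω (e 5) (e 0) = 0 := by
    have A := hc (e 0) (e 2) (e 3); rw [h13, h14, h34] at A
    have B := hc (e 0) (e 1) (e 4); rw [h12, h15, h25] at B
    simp only [map_neg, LinearMap.neg_apply] at B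
    have sk := hsk (e 4) (e 2)
    have d3 := hdiag (e 3)
    linear_combination A / 2 - B / 2 + sk / 2 - d3 / 2 - c51 / 2
  have h5 : ω (e 5) = 0 := by
    apply e.ext
    intro i
    fin_cases i <;>
      simp only [LinearMap.zero_apply] <;>
      first
        | exact c50 | exact c51 | exact c52 | exact c53 | exact c54 | exact hdiag (e 5)
  constructor
  · intro x _
    rw [hsk x (e 5), h5]
    simp
  · intro H
    have h0 := H (e 5) (fun y => by rw [h5]; simp)
    exact e.ne_zero 5 h0
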